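/- Let ζ ∈ D_M. Then ζ ∈ D_M^↑ if and only if for every 0 ≤ x < y, the function t ↦ ζ_t[0,x] is nonnegative, nondecreasing and càdlàg, and the function t ↦ ζ_t((x,y]) is nonnegative, nondecreasing and càdlàg. -/

import Mathlib

open MeasureTheory Filter Set
open scoped NNReal ENNReal BoundedContinuousFunction Topology

noncomputable section

/-- Càdlàg on `[0,∞)`: right-continuous at every `t ≥ 0`, with left limits at
every `t > 0` (along `[0,t)`). -/
def CadlagOn {E : Type*} [TopologicalSpace E] (f : ℝ → E) : Prop :=
  (∀ t : ℝ, 0 ≤ t → ContinuousWithinAt f (Set.Ici t) t) ∧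
  (∀ t : ℝ, 0 < t → ∃ l : E, Filter.Tendsto f (nhdsWithin t (Set.Ico 0 t)) (nhds l))

/-- `D_ℝ`: real-valued càdlàg paths on `[0,∞)`. -/
def DR (f : ℝ → ℝ) : Prop := CadlagOn f

/-- `D_ℝ^↑`: nonnegative nondecreasing real-valued càdlàg paths on `[0,∞)`. -/
def DRup (f : ℝ → ℝ) : Prop :=
  CadlagOn f ∧ (∀ t : ℝ, 0 ≤ t → 0 ≤ f t) ∧ MonotoneOn f (Set.Ici 0)

/-- `D_M`: càdlàg paths with values in the space of finite nonnegative measures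
on `[0,∞)`, equipped with the topology of weak convergence. -/
def DM (ζ : ℝ → FiniteMeasure ℝ≥0) : Prop := CadlagOn ζ

/-- `D_M^↑`: paths in `D_M` such that `t ↦ ∫ f dζ_t` is nondecreasing for every
nonnegative bounded continuous `f` on `[0,∞)`. -/
def DMup (ζ : ℝ → FiniteMeasure ℝ≥0) : Prop :=
  CadlagOn ζ ∧
  ∀ f : ℝ≥0 →ᵇ ℝ≥0, MonotoneOn (fun t => (ζ t).testAgainstNN f) (Set.Ici 0)

/-- First component of the Skorokhod map on the half-line:
`Γ₁[ψ](t) = ψ(t) − inf_{s∈[0,t]} (ψ(s) ∧ 0)`. -/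
def Gamma1 (ψ : ℝ → ℝ) (t : ℝ) : ℝ :=
  ψ t - sInf ((fun s => min (ψ s) 0) '' Set.Icc 0 t)

/-- Second component of the Skorokhod map on the half-line: `Γ₂[ψ] = Γ₁[ψ] − ψ`. -/
def Gamma2 (ψ : ℝ → ℝ) (t : ℝ) : ℝ := Gamma1 ψ t - ψ t

/-- Extension of `g : [0,∞) → ℝ` by `0` on `(-∞,0)`. -/
def lsExt (g : ℝ → ℝ) : ℝ → ℝ := fun t => if t < 0 then 0 else g t

/- The Lebesgue–Stieltjes measure `m^g(B) = g(0)δ₀(B) + ∫_{(0,∞)} 1_B dg` of a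
nonnegative nondecreasing right-continuous `g` on `[0,∞)`, realized as the
Stieltjes measure of the extension of `g` by `0` on `(-∞,0)`. -/
open scoped Classical in
def lsMeasure (g : ℝ → ℝ) : Measure ℝ :=
  if h : Monotone (lsExt g) ∧ ∀ t, ContinuousWithinAt (lsExt g) (Set.Ici t) t then
    StieltjesFunction.measure ⟨lsExt g, h.1, h.2⟩
  else 0

/-- The measure-valued Skorokhod problem (MVSP): `(ξ,β,ι)` solves the MVSP for
the data `(α,μ)`. -/
def SolvesMVSP (α : ℝ → FiniteMeasure ℝ≥0) (μ : ℝ → ℝ)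
    (ξ β : ℝ → FiniteMeasure ℝ≥0) (ι : ℝ → ℝ) : Prop :=
  (∀ x : ℝ≥0, ∀ t : ℝ, 0 ≤ t →
    (ξ t (Set.Iic x) : ℝ) = (α t (Set.Iic x) : ℝ) - μ t + (β t (Set.Ioi x) : ℝ) + ι t) ∧
  (∀ x : ℝ≥0, ∀ᵐ t ∂(lsMeasure (fun s => (β s (Set.Ioi x) : ℝ))), (ξ t (Set.Iic x) : ℝ) = 0) ∧
  (∀ x : ℝ≥0, ∀ᵐ t ∂(lsMeasure ι), (ξ t (Set.Iic x) : ℝ) = 0) ∧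
  (∀ t : ℝ, 0 ≤ t → (β t Set.univ : ℝ) + ι t = μ t)

/-- System (30): `(ξ,β,ι)` solves the MVSP for `(α, μ+ρ)` and `ξ_t[0,t) = 0`
for every `t > 0`. -/
def Solves30 (α : ℝ → FiniteMeasure ℝ≥0) (μ : ℝ → ℝ)
    (ξ β : ℝ → FiniteMeasure ℝ≥0) (ι ρ : ℝ → ℝ) : Prop :=
  SolvesMVSP α (fun t => μ t + ρ t) ξ β ι ∧
  ∀ t : ℝ, 0 < t → (ξ t (Set.Iio (Real.toNNReal t)) : ℝ) = 0

/-- A minimal solution of system (30): a solution (lying in the appropriate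
path spaces) whose reneging function `ρ` is pointwise below that of any other
solution. -/
def IsMinimalSol30 (α : ℝ → FiniteMeasure ℝ≥0) (μ : ℝ → ℝ)
    (ξ β : ℝ → FiniteMeasure ℝ≥0) (ι ρ : ℝ → ℝ) : Prop :=
  (DM ξ ∧ DMup β ∧ DRup ι ∧ DRup ρ ∧ Solves30 α μ ξ β ι ρ) ∧
  ∀ (ξ' β' : ℝ → FiniteMeasure ℝ≥0) (ι' ρ' : ℝ → ℝ),
    DM ξ' → DMup β' → DRup ι' → DRup ρ' → Solves30 α μ ξ' β' ι' ρ' →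
    ∀ t : ℝ, 0 ≤ t → ρ t ≤ ρ' t

/-- The (topological) support of a finite measure on `[0,∞)`: the set of points
all of whose open neighborhoods have positive measure. -/
def measSupport (ν : FiniteMeasure ℝ≥0) : Set ℝ≥0 :=
  {x : ℝ≥0 | ∀ u : Set ℝ≥0, IsOpen u → x ∈ u → ν u ≠ 0}

/-- `σ(ν) = inf supp[ν]`, with value `∞` when `ν = 0`. -/
def sigmaOf (ν : FiniteMeasure ℝ≥0) : ℝ≥0∞ :=
  sInf ((fun x : ℝ≥0 => (x : ℝ≥0∞)) '' measSupport ν)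

/-- Assumption A on the data `(α,μ)`. -/
def AssumptionA (α : ℝ → FiniteMeasure ℝ≥0) (μ : ℝ → ℝ) : Prop :=
  (∃ (ξ0 : FiniteMeasure ℝ≥0) (a0 : ℝ → FiniteMeasure ℝ≥0)
      (lam : ℝ → ℝ) (ν : FiniteMeasure ℝ≥0),
    (∀ x : ℝ≥0, ξ0 {x} = 0) ∧
    ContinuousOn a0 (Set.Ici 0) ∧ DMup a0 ∧
    (∀ t : ℝ, 0 ≤ t → ∀ x : ℝ≥0, a0 t {x} = 0) ∧
    Measurable lam ∧ (∀ s : ℝ, 0 ≤ s → 0 ≤ lam s) ∧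
    (∀ t : ℝ, 0 ≤ t → α t = a0 t + ξ0) ∧
    (∀ t : ℝ, 0 ≤ t → ∀ x : ℝ≥0, (a0 t (Set.Iic x) : ℝ) =
      ∫ s in Set.Icc (0:ℝ) t,
        (if s ≤ (x:ℝ) then lam s * (ν (Set.Iic (Real.toNNReal ((x:ℝ) - s))) : ℝ) else 0)) ∧
    (∀ t : ℝ, 0 ≤ t →
      Filter.Tendsto (fun x : ℝ≥0 =>
          sSup ((fun s => lam s * (ν (Set.Iic x) : ℝ)) '' Set.Icc (0:ℝ) t))
        (nhdsWithin 0 (Set.Ioi 0)) (nhds 0))) ∧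
  (∃ μ0 m : ℝ → ℝ,
    ContinuousOn μ0 (Set.Ici 0) ∧ (∀ t : ℝ, 0 ≤ t → 0 ≤ μ0 t) ∧
    MonotoneOn μ0 (Set.Ici 0) ∧
    Measurable m ∧ (∀ s : ℝ, 0 ≤ s → 0 ≤ m s) ∧
    (∀ t : ℝ, 0 ≤ t → MeasureTheory.IntegrableOn m (Set.Icc 0 t)) ∧
    (∀ t : ℝ, 0 ≤ t → 0 < sInf (m '' Set.Icc (0:ℝ) t)) ∧
    (∀ t : ℝ, 0 ≤ t → μ t = μ0 t + ∫ s in Set.Icc (0:ℝ) t, m s))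

section AuxLemmas

/-- Additivity of a finite measure over `Iic x ∪ Ioc x y`. -/
lemma aux_meas_Iic_add (ν : FiniteMeasure ℝ≥0) {x y : ℝ≥0} (h : x ≤ y) :
    ((ν (Set.Iic y) : ℝ≥0) : ℝ)
      = ((ν (Set.Iic x) : ℝ≥0) : ℝ) + ((ν (Set.Ioc x y) : ℝ≥0) : ℝ) := by
  have hE : (ν (Set.Iic y) : ℝ≥0∞) = (ν (Set.Iic x) : ℝ≥0∞) + (ν (Set.Ioc x y) : ℝ≥0∞) := by
    simp only [FiniteMeasure.ennreal_coeFn_eq_coeFn_toMeasure]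
    rw [← Set.Iic_union_Ioc_eq_Iic h,
      measure_union (Set.Iic_disjoint_Ioc le_rfl) measurableSet_Ioc]
  rw [← ENNReal.coe_add, ENNReal.coe_inj] at hE
  exact_mod_cast congrArg NNReal.toReal hE

/-- Right continuity (in the spatial variable) of the CDF of a finite measure on `ℝ≥0`. -/
lemma aux_cdf_rc (ν : FiniteMeasure ℝ≥0) (x : ℝ≥0) :
    ContinuousWithinAt (fun y : ℝ≥0 => ((ν (Set.Iic y) : ℝ≥0) : ℝ)) (Set.Ici x) x := by
  rw [← continuousWithinAt_Ioi_iff_Ici]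
  have gmono : Monotone (fun y : ℝ≥0 => (ν : Measure ℝ≥0) (Set.Iic y)) :=
    fun a b hab => measure_mono (Set.Iic_subset_Iic.2 hab)
  have key : Tendsto (fun y : ℝ≥0 => (ν : Measure ℝ≥0) (Set.Iic y)) (𝓝[>] x)
      (𝓝 ((ν : Measure ℝ≥0) (Set.Iic x))) := by
    have h1 := gmono.tendsto_nhdsGT x
    have heq : (ν : Measure ℝ≥0) (Set.Iic x)
        = sInf ((fun y : ℝ≥0 => (ν : Measure ℝ≥0) (Set.Iic y)) '' Set.Ioi x) := by
      refine le_antisymm (le_sInf ?_) ?_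
      · rintro b ⟨y, hy, rfl⟩
        exact measure_mono (Set.Iic_subset_Iic.2 (le_of_lt hy))
      · set s : ℕ → Set ℝ≥0 := fun n => Set.Iic (x + ((n : ℝ≥0) + 1)⁻¹) with hs
        have hx : ∀ n : ℕ, x < x + ((n : ℝ≥0) + 1)⁻¹ := fun n =>
          lt_add_of_pos_right x (by positivity)
        have hiInter : (⋂ n, s n) = Set.Iic x := by
          ext z
          simp only [Set.mem_iInter, hs, Set.mem_Iic]
          constructor
          · intro hzn
            have hR : ∀ n : ℕ, (z : ℝ) ≤ (x : ℝ) + ((n : ℝ) + 1)⁻¹ := by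
              intro n
              have h' := NNReal.coe_le_coe.2 (hzn n)
              push_cast at h'
              exact h'
            have hlim : Tendsto (fun n : ℕ => (x : ℝ) + ((n : ℝ) + 1)⁻¹) atTop
                (𝓝 ((x : ℝ) + 0)) :=
              tendsto_const_nhds.add
                (by simpa only [one_div] using tendsto_one_div_add_atTop_nhds_zero_nat (𝕜 := ℝ))
            have := ge_of_tendsto hlim (Filter.Eventually.of_forall hR)
            rw [add_zero] at this
            exact NNReal.coe_le_coe.1 this
          · intro hzx n
            exact le_trans hzx (le_of_lt (hx n))
        have hanti : Antitone s := by
          intro n m hnm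
          apply Set.Iic_subset_Iic.2
          have h1 : ((n : ℝ≥0) + 1) ≤ ((m : ℝ≥0) + 1) := by
            exact_mod_cast add_le_add_left (Nat.cast_le.2 hnm) 1
          gcongr
        have hdir : Directed (· ⊇ ·) s := hanti.directed_ge
        have hinf := Directed.measure_iInter (μ := (ν : Measure ℝ≥0))
          (fun n => measurableSet_Iic.nullMeasurableSet) hdir ⟨0, measure_ne_top _ _⟩
        rw [hiInter] at hinf
        rw [hinf]
        exact le_iInf fun n => sInf_le ⟨_, hx n, rfl⟩
    rw [heq]
    exact h1
  have keyNN : Tendsto (fun y : ℝ≥0 => (ν (Set.Iic y) : ℝ≥0)) (𝓝[>] x)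
      (𝓝 (ν (Set.Iic x))) := by
    rw [← ENNReal.tendsto_coe]
    simpa only [FiniteMeasure.ennreal_coeFn_eq_coeFn_toMeasure] using key
  exact NNReal.tendsto_coe.2 keyNN

/-- Pointwise comparison of testAgainstNN implies comparison of the measures. -/
lemma aux_le_of_testAgainstNN {ν₁ ν₂ : FiniteMeasure ℝ≥0}
    (h : ∀ f : ℝ≥0 →ᵇ ℝ≥0, ν₁.testAgainstNN f ≤ ν₂.testAgainstNN f) :
    (ν₁ : Measure ℝ≥0) ≤ (ν₂ : Measure ℝ≥0) := by
  have hlin : ∀ f : ℝ≥0 →ᵇ ℝ≥0,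
      (∫⁻ ω, f ω ∂(ν₁ : Measure ℝ≥0)) ≤ ∫⁻ ω, f ω ∂(ν₂ : Measure ℝ≥0) := by
    intro f
    have h' := ENNReal.coe_le_coe.2 (h f)
    rwa [FiniteMeasure.testAgainstNN_coe_eq, FiniteMeasure.testAgainstNN_coe_eq] at h'
  have hclosed : ∀ F : Set ℝ≥0, IsClosed F →
      (ν₁ : Measure ℝ≥0) F ≤ (ν₂ : Measure ℝ≥0) F := by
    intro F hF
    have tend := HasOuterApproxClosed.tendsto_lintegral_apprSeq hF (ν₂ : Measure ℝ≥0)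
    refine ge_of_tendsto tend (Filter.Eventually.of_forall fun n => ?_)
    exact le_trans (HasOuterApproxClosed.measure_le_lintegral hF (ν₁ : Measure ℝ≥0) n)
      (hlin _)
  rw [Measure.le_iff]
  intro A hA
  rw [hA.measure_eq_iSup_isClosed_of_ne_top (measure_ne_top _ _)]
  exact iSup_le fun K => iSup_le fun hKA => iSup_le fun hK =>
    le_trans (hclosed K hK) (measure_mono hKA)

/-- Comparison of measures implies pointwise comparison of testAgainstNN. -/
lemma aux_testAgainstNN_mono {ν₁ ν₂ : FiniteMeasure ℝ≥0}
    (h : (ν₁ : Measure ℝ≥0) ≤ (ν₂ : Measure ℝ≥0)) (f : ℝ≥0 →ᵇ ℝ≥0) :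
    ν₁.testAgainstNN f ≤ ν₂.testAgainstNN f := by
  rw [← ENNReal.coe_le_coe, FiniteMeasure.testAgainstNN_coe_eq,
    FiniteMeasure.testAgainstNN_coe_eq]
  exact lintegral_mono' h le_rfl

/-- Comparison of measures yields real-valued comparison on every set. -/
lemma aux_coe_le {ν₁ ν₂ : FiniteMeasure ℝ≥0} (h : (ν₁ : Measure ℝ≥0) ≤ (ν₂ : Measure ℝ≥0))
    (s : Set ℝ≥0) : ((ν₁ s : ℝ≥0) : ℝ) ≤ ((ν₂ s : ℝ≥0) : ℝ) := by
  have h' := Measure.le_iff'.1 h s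
  rw [← FiniteMeasure.ennreal_coeFn_eq_coeFn_toMeasure,
    ← FiniteMeasure.ennreal_coeFn_eq_coeFn_toMeasure] at h'
  exact_mod_cast h'

/-- Comparison of CDFs and of masses of half-open intervals implies comparison of
the measures (via a Lebesgue–Stieltjes construction for the difference). -/
lemma aux_measure_le_of_cdf {ν₁ ν₂ : FiniteMeasure ℝ≥0}
    (h1 : ∀ x : ℝ≥0, ((ν₁ (Set.Iic x) : ℝ≥0) : ℝ) ≤ ((ν₂ (Set.Iic x) : ℝ≥0) : ℝ))
    (h2 : ∀ x y : ℝ≥0, x < y →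
      ((ν₁ (Set.Ioc x y) : ℝ≥0) : ℝ) ≤ ((ν₂ (Set.Ioc x y) : ℝ≥0) : ℝ)) :
    (ν₁ : Measure ℝ≥0) ≤ (ν₂ : Measure ℝ≥0) := by
  classical
  set G : ℝ≥0 → ℝ := fun z => ((ν₂ (Set.Iic z) : ℝ≥0) : ℝ) - ((ν₁ (Set.Iic z) : ℝ≥0) : ℝ)
    with hG
  set Hf : ℝ → ℝ := fun r => if r < 0 then 0 else G r.toNNReal with hHf
  have hGmono : ∀ {x y : ℝ≥0}, x ≤ y → G x ≤ G y := by
    intro x y hxy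
    rcases eq_or_lt_of_le hxy with rfl | hlt
    · exact le_refl _
    · have e1 := aux_meas_Iic_add ν₁ hxy
      have e2 := aux_meas_Iic_add ν₂ hxy
      have e3 := h2 x y hlt
      simp only [hG]
      linarith
  have hGnonneg : ∀ z, 0 ≤ G z := fun z => sub_nonneg.2 (h1 z)
  have hmono : Monotone Hf := by
    intro a b hab
    by_cases hb : b < 0
    · simp [hHf, hab.trans_lt hb, hb]
    · by_cases ha : a < 0
      · simp only [hHf, if_pos ha, if_neg hb]
        exact hGnonneg _
      · simp only [hHf, if_neg ha, if_neg hb]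
        exact hGmono (Real.toNNReal_mono hab)
  have hrc : ∀ r : ℝ, ContinuousWithinAt Hf (Set.Ici r) r := by
    intro r
    by_cases hr : r < 0
    · have hev : Hf =ᶠ[nhdsWithin r (Set.Ici r)] (fun _ => (0 : ℝ)) := by
        have : Set.Iio (0 : ℝ) ∈ 𝓝 r := Iio_mem_nhds hr
        filter_upwards [nhdsWithin_le_nhds this] with u hu
        have hu' : u < 0 := hu
        simp [hHf, hu']
      exact (continuousWithinAt_const (b := (0 : ℝ))).congr_of_eventuallyEq hev
        (by simp [hHf, hr])
    · push_neg at hr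
      have hG2 : ContinuousWithinAt G (Set.Ici r.toNNReal) r.toNNReal :=
        (aux_cdf_rc ν₂ r.toNNReal).sub (aux_cdf_rc ν₁ r.toNNReal)
      have hcomp : ContinuousWithinAt (fun u : ℝ => G u.toNNReal) (Set.Ici r) r := by
        refine ContinuousWithinAt.comp hG2
          continuous_real_toNNReal.continuousWithinAt ?_
        intro u hu
        exact Real.toNNReal_mono hu
      refine hcomp.congr ?_ ?_
      · intro u hu
        have : ¬ u < 0 := not_lt.2 (le_trans hr hu)
        simp [hHf, this]
      · simp [hHf, not_lt.2 hr]
  set S : StieltjesFunction ℝ := ⟨Hf, hmono, hrc⟩ with hS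
  have hSIic : ∀ x : ℝ≥0, S.measure (Set.Iic (x : ℝ)) = ENNReal.ofReal (G x) := by
    intro x
    have hbot : Tendsto S atBot (𝓝 0) := by
      apply Tendsto.congr' _ (tendsto_const_nhds (α := ℝ))
      filter_upwards [Filter.eventually_lt_atBot (0 : ℝ)] with u hu
      simp [hS, hHf, hu]
    rw [S.measure_Iic hbot]
    have hcoe : S (x : ℝ) = G x := by
      simp [hS, hHf, not_lt.2 x.coe_nonneg, Real.toNNReal_coe]
    rw [hcoe, sub_zero]
  have key : (ν₂ : Measure ℝ≥0)
      = (ν₁ : Measure ℝ≥0) + Measure.map Real.toNNReal S.measure := by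
    refine Measure.ext_of_Iic _ _ (fun x => ?_)
    rw [Measure.add_apply, Measure.map_apply measurable_real_toNNReal measurableSet_Iic]
    have hpre : Real.toNNReal ⁻¹' Set.Iic x = Set.Iic (x : ℝ) := by
      ext r
      simp [Real.toNNReal_le_iff_le_coe]
    rw [hpre, hSIic x, ← FiniteMeasure.ennreal_coeFn_eq_coeFn_toMeasure,
      ← FiniteMeasure.ennreal_coeFn_eq_coeFn_toMeasure]
    have hle : (ν₁ (Set.Iic x) : ℝ≥0) ≤ ν₂ (Set.Iic x) := by exact_mod_cast h1 x
    have hGx : G x = ((ν₂ (Set.Iic x) - ν₁ (Set.Iic x) : ℝ≥0) : ℝ) :=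
      (NNReal.coe_sub hle).symm
    rw [hGx, ENNReal.ofReal_coe_nnreal, ← ENNReal.coe_add, ENNReal.coe_inj]
    exact (add_tsub_cancel_of_le hle).symm
  calc (ν₁ : Measure ℝ≥0) ≤ (ν₁ : Measure ℝ≥0) + Measure.map Real.toNNReal S.measure :=
        Measure.le_add_right le_rfl
    _ = (ν₂ : Measure ℝ≥0) := key.symm

/-- Right continuity in time of the mass of a closed set, for a càdlàg monotone path. -/
lemma aux_rc_time (ζ : ℝ → FiniteMeasure ℝ≥0) (hζ : CadlagOn ζ)
    (hmono : ∀ s t : ℝ, 0 ≤ s → s ≤ t → (ζ s : Measure ℝ≥0) ≤ (ζ t : Measure ℝ≥0))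
    {F : Set ℝ≥0} (hF : IsClosed F) {t : ℝ} (ht : 0 ≤ t) :
    ContinuousWithinAt (fun u => ((ζ u F : ℝ≥0) : ℝ)) (Set.Ici t) t := by
  have htend : Tendsto ζ (nhdsWithin t (Set.Ici t)) (𝓝 (ζ t)) := hζ.1 t ht
  have hlimsup := FiniteMeasure.limsup_measure_closed_le_of_tendsto htend hF
  have hev : ∀ᶠ u in nhdsWithin t (Set.Ici t),
      ((ζ t : Measure ℝ≥0) F) ≤ (ζ u : Measure ℝ≥0) F := by
    filter_upwards [self_mem_nhdsWithin] with u hu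
    exact Measure.le_iff'.1 (hmono t u ht hu) F
  have hliminf : ((ζ t : Measure ℝ≥0) F)
      ≤ Filter.liminf (fun u => (ζ u : Measure ℝ≥0) F) (nhdsWithin t (Set.Ici t)) :=
    Filter.le_liminf_of_le (by isBoundedDefault) hev
  have htendF : Tendsto (fun u => (ζ u : Measure ℝ≥0) F) (nhdsWithin t (Set.Ici t))
      (𝓝 ((ζ t : Measure ℝ≥0) F)) :=
    tendsto_of_le_liminf_of_limsup_le hliminf hlimsup
  have hNN : Tendsto (fun u => (ζ u F : ℝ≥0)) (nhdsWithin t (Set.Ici t)) (𝓝 (ζ t F)) := by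
    rw [← ENNReal.tendsto_coe]
    simpa only [FiniteMeasure.ennreal_coeFn_eq_coeFn_toMeasure] using htendF
  exact NNReal.tendsto_coe.2 hNN

/-- A function monotone on `[0,∞)` has left limits. -/
lemma aux_left_limit {f : ℝ → ℝ} (hf : MonotoneOn f (Set.Ici 0)) {t : ℝ} (ht : 0 < t) :
    ∃ l : ℝ, Tendsto f (nhdsWithin t (Set.Ico 0 t)) (𝓝 l) := by
  set g : ℝ → ℝ := fun s => f (max s 0) with hg
  have hgmono : Monotone g := fun a b hab =>
    hf (Set.mem_Ici.2 (le_max_right _ _)) (Set.mem_Ici.2 (le_max_right _ _)) (max_le_max hab le_rfl)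
  refine ⟨sSup (g '' Set.Iio t), ?_⟩
  have h1 := hgmono.tendsto_nhdsLT t
  have h2 : Tendsto g (nhdsWithin t (Set.Ico 0 t)) (𝓝 (sSup (g '' Set.Iio t))) :=
    h1.mono_left (nhdsWithin_mono t Set.Ico_subset_Iio_self)
  refine Filter.Tendsto.congr' ?_ h2
  filter_upwards [self_mem_nhdsWithin] with u hu
  simp [hg, max_eq_left hu.1]

end AuxLemmas

/-- A path `ζ ∈ D_M` lies in `D_M^↑` if and only if for every `0 ≤ x < y` the
functions `t ↦ ζ_t[0,x]` and `t ↦ ζ_t((x,y])` are nonnegative, nondecreasing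
and càdlàg. -/
theorem dmup_iff_intervals
    (ζ : ℝ → FiniteMeasure ℝ≥0) (hζ : DM ζ) :
    DMup ζ ↔
      ∀ x y : ℝ≥0, x < y →
        DRup (fun t => (ζ t (Set.Iic x) : ℝ)) ∧
        DRup (fun t => (ζ t (Set.Ioc x y) : ℝ)) := by
  constructor
  · rintro ⟨hc, hm⟩ x y hxy
    have hle : ∀ s t : ℝ, 0 ≤ s → s ≤ t → (ζ s : Measure ℝ≥0) ≤ (ζ t : Measure ℝ≥0) := by
      intro s t hs hst
      exact aux_le_of_testAgainstNN (fun f => hm f hs (le_trans hs hst) hst)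
    have hIic : ∀ z : ℝ≥0, DRup (fun t => ((ζ t (Set.Iic z) : ℝ≥0) : ℝ)) := by
      intro z
      have hmonoz : MonotoneOn (fun t => ((ζ t (Set.Iic z) : ℝ≥0) : ℝ)) (Set.Ici 0) :=
        fun s hs t _ hst => aux_coe_le (hle s t hs hst) _
      exact ⟨⟨fun t ht => aux_rc_time ζ hζ hle isClosed_Iic ht,
              fun t ht => aux_left_limit hmonoz ht⟩,
             fun t _ => NNReal.coe_nonneg _, hmonoz⟩
    refine ⟨hIic x, ?_⟩
    have heq : (fun t => ((ζ t (Set.Ioc x y) : ℝ≥0) : ℝ))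
        = fun t => ((ζ t (Set.Iic y) : ℝ≥0) : ℝ) - ((ζ t (Set.Iic x) : ℝ≥0) : ℝ) := by
      funext t
      have := aux_meas_Iic_add (ζ t) hxy.le
      linarith
    have hmonoIoc : MonotoneOn (fun t => ((ζ t (Set.Ioc x y) : ℝ≥0) : ℝ)) (Set.Ici 0) :=
      fun s hs t _ hst => aux_coe_le (hle s t hs hst) _
    refine ⟨⟨?_, ?_⟩, fun t _ => NNReal.coe_nonneg _, hmonoIoc⟩
    · intro t ht
      have h1 := ((hIic y).1.1 t ht).sub ((hIic x).1.1 t ht)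
      rw [heq]
      exact h1
    · intro t ht
      obtain ⟨l1, hl1⟩ := (hIic y).1.2 t ht
      obtain ⟨l2, hl2⟩ := (hIic x).1.2 t ht
      exact ⟨l1 - l2, heq ▸ (hl1.sub hl2)⟩
  · intro h
    refine ⟨hζ, fun f s hs t ht hst => ?_⟩
    have hle := aux_measure_le_of_cdf (ν₁ := ζ s) (ν₂ := ζ t)
      (fun x => (h x (x + 1) (lt_add_of_pos_right x one_pos)).1.2.2 hs ht hst)
      (fun x y hxy => (h x y hxy).2.2.2 hs ht hst)
    exact aux_testAgainstNN_mono hle f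

end
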